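/- Let F be a finite field with at least n elements and let k ≤ n be natural numbers. Then there exists an injective F-linear map G from (Fin k → F) to (Fin n → F) such that every nonzero u : Fin k → F satisfies hammingNorm (G u) ≥ n - k + 1, where hammingNorm counts the number of nonzero coordinates. -/

import Mathlib

open Polynomial Finset

theorem exists_mds_code (F : Type*) [Field F] [Fintype F] [DecidableEq F] (n k : ℕ)
    (hn : n ≤ Fintype.card F) (hk : k ≤ n) :
    ∃ G : (Fin k → F) →ₗ[F] (Fin n → F), Function.Injective G ∧
      ∀ u : Fin k → F, u ≠ 0 → n - k + 1 ≤ hammingNorm (G u) := by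
  classical
  obtain ⟨α⟩ : Nonempty (Fin n ↪ F) := by
    apply Function.Embedding.nonempty_of_card_le
    simpa using hn
  set G : (Fin k → F) →ₗ[F] (Fin n → F) :=
    { toFun := fun u i => ∑ j : Fin k, u j * (α i) ^ (j : ℕ)
      map_add' := by intros x y; funext i; simp [add_mul, Finset.sum_add_distrib]
      map_smul' := by intros c x; funext i; simp [Finset.mul_sum, mul_assoc] }
    with hG
  have key : ∀ u : Fin k → F, u ≠ 0 → n - k + 1 ≤ hammingNorm (G u) := by
    intro u hu
    have hk1 : 1 ≤ k := by
      rcases Nat.eq_zero_or_pos k with h | h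
      · subst h; exact absurd (_root_.funext fun j => j.elim0) hu
      · exact h
    set p : F[X] := ∑ j : Fin k, C (u j) * X ^ (j : ℕ) with hp
    have hcoeff : ∀ j : Fin k, p.coeff (j : ℕ) = u j := by
      intro j
      rw [hp, Polynomial.finset_sum_coeff]
      simp only [Polynomial.coeff_C_mul, Polynomial.coeff_X_pow, mul_ite, mul_one, mul_zero]
      rw [Finset.sum_eq_single j]
      · simp
      · intro b _ hb
        simp only [Fin.val_eq_val]
        rw [if_neg (fun h => hb h.symm)]
      · simp
    have hpne : p ≠ 0 := by
      intro h0
      apply hu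
      funext j
      have := hcoeff j
      rw [h0] at this
      simpa using this.symm
    have heval : ∀ i : Fin n, p.eval (α i) = G u i := by
      intro i
      rw [hp]
      simp [hG, Polynomial.eval_finset_sum]
    have hdeg : p.degree < (k : WithBot ℕ) := by
      apply lt_of_le_of_lt (Polynomial.degree_sum_le _ _)
      rw [Finset.sup_lt_iff (by exact_mod_cast WithBot.bot_lt_coe k)]
      intro j _
      calc (C (u j) * X ^ (j : ℕ)).degree ≤ ((j : ℕ) : WithBot ℕ) :=
            Polynomial.degree_C_mul_X_pow_le _ _
        _ < (k : WithBot ℕ) := by exact_mod_cast j.2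
    have hnd : p.natDegree < k := by
      rwa [← Polynomial.natDegree_lt_iff_degree_lt hpne] at hdeg
    have hZ : ({i | G u i = 0} : Finset (Fin n)).card ≤ k - 1 := by
      have h1 : ({i | G u i = 0} : Finset (Fin n)).card ≤ p.roots.toFinset.card := by
        apply Finset.card_le_card_of_injOn (fun i => α i)
        · intro i hi
          simp only [Finset.mem_coe, Finset.mem_filter, Finset.mem_univ, true_and, Set.mem_setOf_eq] at hi
          simp only [Finset.mem_coe, Multiset.mem_toFinset, Polynomial.mem_roots hpne, Polynomial.IsRoot]
          rw [heval i]
          exact hi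
        · exact fun a _ b _ h => α.injective h
      calc ({i | G u i = 0} : Finset (Fin n)).card ≤ p.roots.toFinset.card := h1
        _ ≤ Multiset.card p.roots := Multiset.toFinset_card_le _
        _ ≤ p.natDegree := Polynomial.card_roots' p
        _ ≤ k - 1 := by omega
    have hsum : hammingNorm (G u) + ({i | G u i = 0} : Finset (Fin n)).card = n := by
      have := Finset.card_filter_add_card_filter_not
        (s := (Finset.univ : Finset (Fin n))) (p := fun i => G u i = 0)
      simp only [Finset.card_univ, Fintype.card_fin] at this
      unfold hammingNorm
      simp only [ne_eq]
      omega
    omega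
  refine ⟨G, ?_, key⟩
  rw [← LinearMap.ker_eq_bot, LinearMap.ker_eq_bot']
  intro m hm
  by_contra hne
  have := key m hne
  rw [hm] at this
  rw [hammingNorm_zero] at this
  omega
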